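/- Let H₀ be a fixed balanced graph with v vertices, ℓ edges, and density d = ℓ/v. With i.i.d. good edge-weights on K_n, let W_n be the maximum total weight of a copy of H₀ in K_n. Then for δ_n = (log n)^{−1/2}, P(W_n > (1+δ_n) ℓ Λ*⁻¹(d⁻¹ log n)) ≤ exp(−δ_n v log n), and in particular W_n ≤ (1+o(1)) ℓ Λ*⁻¹(d⁻¹ log n) with high probability. -/

import Mathlib

open MeasureTheory ProbabilityTheory Real Filter

noncomputable section

-- Log-moment generating function `Λ`, valued in `EReal` (`⊤` when the exponential
-- moment is infinite).
open Classical in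
def lmgf {Ω : Type*} [MeasurableSpace Ω] (μ : Measure Ω) (X : Ω → ℝ) (s : ℝ) : EReal :=
  if Integrable (fun ω => Real.exp (s * X ω)) μ
  then ((Real.log (∫ ω, Real.exp (s * X ω) ∂μ) : ℝ) : EReal)
  else ⊤

/-- The Legendre transform `Λ*` of the log-moment generating function (rate function). -/
def rateFn {Ω : Type*} [MeasurableSpace Ω] (μ : Measure Ω) (X : Ω → ℝ) (t : ℝ) : EReal :=
  ⨆ s : ℝ, ((s * t : ℝ) : EReal) - lmgf μ X s

/-- The generalised inverse `Λ*⁻¹(t) = inf {s ≥ 0 : Λ*(s) ≥ t}`. -/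
def rateFnInv {Ω : Type*} [MeasurableSpace Ω] (μ : Measure Ω) (X : Ω → ℝ) (t : ℝ) : ℝ :=
  sInf {s : ℝ | 0 ≤ s ∧ (t : EReal) ≤ rateFn μ X s}

/-- `X` is symmetric: `-X` has the same distribution as `X`. -/
def SymmetricRV {Ω : Type*} [MeasurableSpace Ω] (μ : Measure Ω) (X : Ω → ℝ) : Prop :=
  Measure.map X μ = Measure.map (fun ω => -X ω) μ

/-- `Λ` is finite in a neighbourhood of `0`. -/
def FiniteLmgfNearZero {Ω : Type*} [MeasurableSpace Ω] (μ : Measure Ω) (X : Ω → ℝ) : Prop :=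
  ∃ δ > (0:ℝ), ∀ s : ℝ, |s| < δ → lmgf μ X s ≠ ⊤

/-- `X` has regular upper tails: `P(X > t) = exp(-(1+o(1)) Λ*(t))` as `t → ∞`
(vacuous at points where `Λ*(t) = ∞`). -/
def RegularUpperTails {Ω : Type*} [MeasurableSpace Ω] (μ : Measure Ω) (X : Ω → ℝ) : Prop :=
  ∀ ε > (0:ℝ), ∀ᶠ t in atTop, ∀ r : ℝ, rateFn μ X t = (r : EReal) →
    Real.exp (-(1+ε)*r) ≤ (μ {ω | t < X ω}).toReal ∧
    (μ {ω | t < X ω}).toReal ≤ Real.exp (-(1-ε)*r)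

/-- A good random variable: symmetric, `Λ` finite near `0`, regular upper tails. -/
def Good {Ω : Type*} [MeasurableSpace Ω] (μ : Measure Ω) (X : Ω → ℝ) : Prop :=
  SymmetricRV μ X ∧ FiniteLmgfNearZero μ X ∧ RegularUpperTails μ X

/-- The non-diagonal elements of `Sym2 (Fin n)`: the edges of the complete graph `K_n`. -/
abbrev EdgeT (n : ℕ) := {e : Sym2 (Fin n) // ¬ e.IsDiag}


/-- Total weight of a subgraph `G'` of `K_n` with edge weights `x`. -/
def graphWeight {n : ℕ} (x : EdgeT n → ℝ) (G' : SimpleGraph (Fin n)) : ℝ :=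
  ∑ e : EdgeT n, Set.indicator {e' : EdgeT n | (e' : Sym2 (Fin n)) ∈ G'.edgeSet} x e

/-- Total weight of the edges of a walk `p` with edge weights `x`. -/
def walkWeight {n : ℕ} (x : EdgeT n → ℝ) {u v : Fin n}
    (p : (⊤ : SimpleGraph (Fin n)).Walk u v) : ℝ :=
  ∑ e : EdgeT n, Set.indicator {e' : EdgeT n | (e' : Sym2 (Fin n)) ∈ p.edges} x e

end

set_option linter.unusedSectionVars false

section Helpers

variable {Ω₀ : Type*} [MeasurableSpace Ω₀] (μ₀ : Measure Ω₀) [IsProbabilityMeasure μ₀]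
  (ξ : Ω₀ → ℝ)

lemma lmgf_of_integrable {s : ℝ} (h : Integrable (fun ω => Real.exp (s * ξ ω)) μ₀) :
    lmgf μ₀ ξ s = ((Real.log (∫ ω, Real.exp (s * ξ ω) ∂μ₀) : ℝ) : EReal) := if_pos h

lemma integrable_of_lmgf_ne_top {s : ℝ} (h : lmgf μ₀ ξ s ≠ ⊤) :
    Integrable (fun ω => Real.exp (s * ξ ω)) μ₀ := by
  by_contra hc
  rw [lmgf, if_neg hc] at h
  exact h rfl

lemma symm_integral_neg (hsym : SymmetricRV μ₀ ξ) (hξ : Measurable ξ) (s : ℝ) :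
    ∫ ω, Real.exp (s * ξ ω) ∂μ₀ = ∫ ω, Real.exp (-s * ξ ω) ∂μ₀ := by
  have hg : Measurable (fun x : ℝ => Real.exp (s * x)) := (measurable_id.const_mul s).exp
  have h1 : ∫ ω, Real.exp (s * ξ ω) ∂μ₀ = ∫ x, Real.exp (s * x) ∂(Measure.map ξ μ₀) :=
    (integral_map hξ.aemeasurable hg.aestronglyMeasurable).symm
  have h2 : ∫ x, Real.exp (s * x) ∂(Measure.map (fun ω => -ξ ω) μ₀)
      = ∫ ω, Real.exp (s * (-ξ ω)) ∂μ₀ :=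
    integral_map hξ.neg.aemeasurable hg.aestronglyMeasurable
  rw [h1, hsym, h2]
  simp [mul_neg, neg_mul]

lemma integrable_exp_neg_of_symm (hsym : SymmetricRV μ₀ ξ) (hξ : Measurable ξ) {s : ℝ}
    (h : Integrable (fun ω => Real.exp (s * ξ ω)) μ₀) :
    Integrable (fun ω => Real.exp (-s * ξ ω)) μ₀ := by
  have hg : Measurable (fun x : ℝ => Real.exp (s * x)) := (measurable_id.const_mul s).exp
  have h1 : Integrable (fun x : ℝ => Real.exp (s * x)) (Measure.map ξ μ₀) :=
    (integrable_map_measure hg.aestronglyMeasurable hξ.aemeasurable).mpr h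
  rw [hsym] at h1
  have h2 := (integrable_map_measure hg.aestronglyMeasurable hξ.neg.aemeasurable).mp h1
  simpa [Function.comp_def, mul_neg, neg_mul] using h2

lemma one_le_integral_exp (hsym : SymmetricRV μ₀ ξ) (hξ : Measurable ξ) {s : ℝ}
    (h : Integrable (fun ω => Real.exp (s * ξ ω)) μ₀) :
    1 ≤ ∫ ω, Real.exp (s * ξ ω) ∂μ₀ := by
  have hneg := integrable_exp_neg_of_symm μ₀ ξ hsym hξ h
  have hpt : ∀ ω, (2:ℝ) ≤ Real.exp (s * ξ ω) + Real.exp (-s * ξ ω) := by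
    intro ω
    have h1 := Real.add_one_le_exp (s * ξ ω)
    have h2 := Real.add_one_le_exp (-s * ξ ω)
    nlinarith
  have hint : (2:ℝ) ≤ ∫ ω, (Real.exp (s * ξ ω) + Real.exp (-s * ξ ω)) ∂μ₀ := by
    have := integral_mono (integrable_const (2:ℝ)) (h.add hneg) hpt
    simpa using this
  rw [integral_add h hneg, ← symm_integral_neg μ₀ ξ hsym hξ s] at hint
  linarith

lemma lmgf_nonneg (hsym : SymmetricRV μ₀ ξ) (hξ : Measurable ξ) {s : ℝ}
    (h : Integrable (fun ω => Real.exp (s * ξ ω)) μ₀) :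
    0 ≤ Real.log (∫ ω, Real.exp (s * ξ ω) ∂μ₀) :=
  Real.log_nonneg (one_le_integral_exp μ₀ ξ hsym hξ h)

end Helpers

section Helpers2

set_option linter.unusedSectionVars false

variable {Ω₀ : Type*} [MeasurableSpace Ω₀] (μ₀ : Measure Ω₀) [IsProbabilityMeasure μ₀]
  (ξ : Ω₀ → ℝ)

lemma le_rateFn_of_int {u t : ℝ} (h : Integrable (fun ω => Real.exp (u * ξ ω)) μ₀) :
    ((u * t - Real.log (∫ ω, Real.exp (u * ξ ω) ∂μ₀) : ℝ) : EReal) ≤ rateFn μ₀ ξ t := by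
  have := le_iSup (fun s : ℝ => ((s * t : ℝ) : EReal) - lmgf μ₀ ξ s) u
  rw [lmgf_of_integrable μ₀ ξ h] at this
  rw [EReal.coe_sub]
  exact this

lemma rate_set_nonempty (hfin : FiniteLmgfNearZero μ₀ ξ) (t : ℝ) :
    {s : ℝ | 0 ≤ s ∧ (t : EReal) ≤ rateFn μ₀ ξ s}.Nonempty := by
  obtain ⟨δ₀, hδ₀, hf⟩ := hfin
  set u := δ₀ / 2 with hu_def
  have hu_pos : 0 < u := by positivity
  have hu : |u| < δ₀ := by rw [abs_of_pos hu_pos]; linarith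
  have hint := integrable_of_lmgf_ne_top μ₀ ξ (hf u hu)
  set c := Real.log (∫ ω, Real.exp (u * ξ ω) ∂μ₀) with hc_def
  refine ⟨max 0 ((t + c) / u), le_max_left _ _, ?_⟩
  have hkey : t ≤ u * max 0 ((t + c) / u) - c := by
    rcases le_total ((t + c) / u) 0 with hle | hle
    · rw [max_eq_left hle]
      have : t + c ≤ 0 := by
        have := mul_nonpos_of_nonneg_of_nonpos hu_pos.le hle
        rw [mul_div_cancel₀ _ hu_pos.ne'] at this
        linarith
      linarith
    · rw [max_eq_right hle, mul_div_cancel₀ _ hu_pos.ne']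
      linarith
  calc (t : EReal) ≤ ((u * max 0 ((t + c) / u) - c : ℝ) : EReal) := by exact_mod_cast hkey
    _ ≤ rateFn μ₀ ξ (max 0 ((t + c) / u)) := le_rateFn_of_int μ₀ ξ hint

lemma exists_good_s (hsym : SymmetricRV μ₀ ξ) (hξ : Measurable ξ) {r θ'' : ℝ}
    (hθ : 0 ≤ θ'') (hr : 0 < r) (h : ((r : ℝ) : EReal) < rateFn μ₀ ξ θ'') :
    ∃ s : ℝ, 0 ≤ s ∧ Integrable (fun ω => Real.exp (s * ξ ω)) μ₀ ∧
      r < s * θ'' - Real.log (∫ ω, Real.exp (s * ξ ω) ∂μ₀) := by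
  rw [rateFn, lt_iSup_iff] at h
  obtain ⟨s, hs⟩ := h
  have hne : lmgf μ₀ ξ s ≠ ⊤ := by
    intro htop
    rw [htop, EReal.sub_top] at hs
    exact not_lt_bot hs
  have hint := integrable_of_lmgf_ne_top μ₀ ξ hne
  rw [lmgf_of_integrable μ₀ ξ hint, ← EReal.coe_sub] at hs
  have hlt : r < s * θ'' - Real.log (∫ ω, Real.exp (s * ξ ω) ∂μ₀) := by exact_mod_cast hs
  refine ⟨s, ?_, hint, hlt⟩
  by_contra hneg
  push_neg at hneg
  have h1 : s * θ'' ≤ 0 := mul_nonpos_of_nonpos_of_nonneg hneg.le hθ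
  have h2 := lmgf_nonneg μ₀ ξ hsym hξ hint
  linarith

end Helpers2

section Helpers3

set_option linter.unusedSectionVars false

variable {Ω₀ : Type*} [MeasurableSpace Ω₀] (μ₀ : Measure Ω₀) [IsProbabilityMeasure μ₀]
  (ξ : Ω₀ → ℝ)

lemma markov_lmgf (hξ : Measurable ξ) {c u : ℝ} (hc : 0 < c) (hu : 0 ≤ u)
    (hq : 0 < (μ₀ {ω | c ≤ ξ ω}).toReal)
    (hint : Integrable (fun ω => Real.exp (u * ξ ω)) μ₀) :
    Real.log ((μ₀ {ω | c ≤ ξ ω}).toReal) + c * u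
      ≤ Real.log (∫ ω, Real.exp (u * ξ ω) ∂μ₀) := by
  set A := {ω | c ≤ ξ ω} with hA_def
  have hA : MeasurableSet A := measurableSet_le measurable_const hξ
  set q := (μ₀ A).toReal with hq_def
  have h1 : q * Real.exp (u * c) = ∫ _ω in A, Real.exp (u * c) ∂μ₀ := by
    rw [setIntegral_const, smul_eq_mul]; rfl
  have h2 : ∫ _ω in A, Real.exp (u * c) ∂μ₀ ≤ ∫ ω in A, Real.exp (u * ξ ω) ∂μ₀ := by
    refine setIntegral_mono_on ?_ hint.integrableOn hA fun ω hω => ?_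
    · exact integrableOn_const (measure_ne_top _ _)
    · exact Real.exp_le_exp.mpr (mul_le_mul_of_nonneg_left hω hu)
  have h3 : ∫ ω in A, Real.exp (u * ξ ω) ∂μ₀ ≤ ∫ ω, Real.exp (u * ξ ω) ∂μ₀ :=
    setIntegral_le_integral hint (Filter.Eventually.of_forall fun ω => (Real.exp_pos _).le)
  have h4 : q * Real.exp (u * c) ≤ ∫ ω, Real.exp (u * ξ ω) ∂μ₀ := by
    rw [h1]; exact le_trans h2 h3
  have h5 : Real.log (q * Real.exp (u * c)) ≤ Real.log (∫ ω, Real.exp (u * ξ ω) ∂μ₀) :=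
    Real.log_le_log (by positivity) h4
  rwa [Real.log_mul hq.ne' (Real.exp_ne_zero _), Real.log_exp, mul_comm u c] at h5

lemma meas_pos_eq_zero_of_rateFnInv_zero (hsym : SymmetricRV μ₀ ξ) (hξ : Measurable ξ)
    (hfin : FiniteLmgfNearZero μ₀ ξ) {t : ℝ} (ht : 0 < t)
    (hzero : rateFnInv μ₀ ξ t = 0) :
    μ₀ {ω | 0 < ξ ω} = 0 := by
  by_contra hpos
  have hcup : {ω | 0 < ξ ω} ⊆ ⋃ k : ℕ, {ω | 1 / ((k : ℝ) + 1) ≤ ξ ω} := by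
    intro ω hω
    obtain ⟨k, hk⟩ := exists_nat_one_div_lt (K := ℝ) (hω : (0:ℝ) < ξ ω)
    exact Set.mem_iUnion.mpr ⟨k, hk.le⟩
  have hex : ∃ k : ℕ, μ₀ {ω | 1 / ((k : ℝ) + 1) ≤ ξ ω} ≠ 0 := by
    by_contra hall
    push_neg at hall
    exact hpos (measure_mono_null hcup (measure_iUnion_null hall))
  obtain ⟨k, hk⟩ := hex
  set c : ℝ := 1 / ((k : ℝ) + 1) with hc_def
  have hc : 0 < c := by positivity
  set q := (μ₀ {ω | c ≤ ξ ω}).toReal with hq_def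
  have hq : 0 < q := ENNReal.toReal_pos hk (measure_ne_top _ _)
  have hq1 : q ≤ 1 := by
    have := ENNReal.toReal_mono ENNReal.one_ne_top (prob_le_one (μ := μ₀) (s := {ω | c ≤ ξ ω}))
    simpa using this
  set B := (-Real.log q) / c with hB_def
  have hB : 0 ≤ B := div_nonneg (neg_nonneg.mpr (Real.log_nonpos hq.le hq1)) hc.le
  have hBc : B * c = -Real.log q := div_mul_cancel₀ _ hc.ne'
  have hB1 : 0 < t / (B + 1) := by positivity
  set s' := min c (t / (B + 1)) / 2 with hs'_def
  have hminpos : 0 < min c (t / (B + 1)) := lt_min hc hB1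
  have hs' : 0 < s' := by positivity
  have hs'le : s' ≤ min c (t / (B + 1)) := by rw [hs'_def]; linarith
  have hT := rate_set_nonempty μ₀ ξ hfin t
  have hlt : sInf {s : ℝ | 0 ≤ s ∧ (t : EReal) ≤ rateFn μ₀ ξ s} < s' := by
    have : rateFnInv μ₀ ξ t < s' := by rw [hzero]; exact hs'
    exact this
  obtain ⟨θ'', hθ''T, hθ''lt⟩ := exists_lt_of_csInf_lt hT hlt
  obtain ⟨hθ''0, hθ''rate⟩ := hθ''T
  have hθc : θ'' < c := lt_of_lt_of_le hθ''lt (hs'le.trans (min_le_left _ _))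
  have hub : rateFn μ₀ ξ θ'' ≤ ((B * θ'' : ℝ) : EReal) := by
    rw [rateFn]
    refine iSup_le fun u => ?_
    by_cases hint : Integrable (fun ω => Real.exp (u * ξ ω)) μ₀
    · rw [lmgf_of_integrable μ₀ ξ hint, ← EReal.coe_sub, EReal.coe_le_coe_iff]
      set Λu := Real.log (∫ ω, Real.exp (u * ξ ω) ∂μ₀) with hΛ
      have hΛ0 : 0 ≤ Λu := lmgf_nonneg μ₀ ξ hsym hξ hint
      rcases le_or_gt u 0 with hu | hu
      · have h1 : u * θ'' ≤ 0 := mul_nonpos_of_nonpos_of_nonneg hu hθ''0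
        nlinarith
      · have hmark : Real.log q + c * u ≤ Λu := markov_lmgf μ₀ ξ hξ hc hu.le hq hint
        rcases le_or_gt u B with huB | huB
        · nlinarith
        · nlinarith [mul_nonneg (sub_nonneg.mpr huB.le) (sub_nonneg.mpr hθc.le)]
    · rw [lmgf, if_neg hint, EReal.sub_top]
      exact bot_le
  have h1 : (t : EReal) ≤ ((B * θ'' : ℝ) : EReal) := le_trans hθ''rate hub
  rw [EReal.coe_le_coe_iff] at h1
  have hθs' : θ'' ≤ t / (B + 1) := hθ''lt.le.trans (hs'le.trans (min_le_right _ _))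
  have hfin1 : B * θ'' ≤ B * (t / (B + 1)) := mul_le_mul_of_nonneg_left hθs' hB
  have hfin2 : B * (t / (B + 1)) < t := by
    rw [mul_div_assoc', div_lt_iff₀ (by positivity : (0:ℝ) < B + 1)]
    nlinarith
  linarith

lemma meas_ne_zero_eq_zero (hsym : SymmetricRV μ₀ ξ) (hξ : Measurable ξ)
    (hpos : μ₀ {ω | 0 < ξ ω} = 0) :
    μ₀ {ω | ξ ω ≠ 0} = 0 := by
  have hneg : μ₀ {ω | ξ ω < 0} = 0 := by
    have h1 : {ω | ξ ω < 0} = ξ ⁻¹' (Set.Iio 0) := rfl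
    have h2 : {ω | 0 < ξ ω} = (fun ω => -ξ ω) ⁻¹' (Set.Iio 0) := by
      ext ω; simp
    rw [h1, ← Measure.map_apply hξ measurableSet_Iio, hsym,
      Measure.map_apply (f := fun ω => -ξ ω) hξ.neg measurableSet_Iio, ← h2]
    exact hpos
  have hsub : {ω | ξ ω ≠ 0} ⊆ {ω | ξ ω < 0} ∪ {ω | 0 < ξ ω} := by
    intro ω hω
    exact (hω : ξ ω ≠ 0).lt_or_gt
  exact measure_mono_null hsub (measure_union_null hneg hpos)

end Helpers3

section Helpers4

lemma graphWeight_eq_sum {n : ℕ} (x : EdgeT n → ℝ) (G' : SimpleGraph (Fin n))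
    [DecidablePred fun e : EdgeT n => (e : Sym2 (Fin n)) ∈ G'.edgeSet] :
    graphWeight x G' = ∑ e ∈ Finset.univ.filter
      (fun e : EdgeT n => (e : Sym2 (Fin n)) ∈ G'.edgeSet), x e := by
  rw [graphWeight, Finset.sum_filter]
  refine Finset.sum_congr rfl fun e _ => ?_
  by_cases h : (e : Sym2 (Fin n)) ∈ G'.edgeSet
  · simp [Set.indicator_apply, Set.mem_setOf_eq, h]
  · simp [Set.indicator_apply, Set.mem_setOf_eq, h]

lemma card_filter_map {v n : ℕ} (H₀ : SimpleGraph (Fin v)) [DecidableRel H₀.Adj]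
    (f : Fin v ↪ Fin n)
    [DecidablePred fun e : EdgeT n => (e : Sym2 (Fin n)) ∈ (SimpleGraph.map f H₀).edgeSet] :
    (Finset.univ.filter (fun e : EdgeT n =>
      (e : Sym2 (Fin n)) ∈ (SimpleGraph.map f H₀).edgeSet)).card = H₀.edgeFinset.card := by
  have key : ∀ q : Sym2 (Fin n), q ∈ (SimpleGraph.map f H₀).edgeSet →
      ∃ e ∈ H₀.edgeFinset, Sym2.map f e = q := by
    intro q
    induction q using Sym2.ind with
    | _ u w =>
      intro hq
      rw [SimpleGraph.mem_edgeSet, SimpleGraph.map_adj] at hq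
      obtain ⟨a, b, hab, ha, hb⟩ := hq
      refine ⟨s(a, b), SimpleGraph.mem_edgeFinset.mpr (H₀.mem_edgeSet.mpr hab), ?_⟩
      rw [Sym2.map_pair_eq, ha, hb]
  refine (Finset.card_bij (fun e he => (⟨Sym2.map f e, ?_⟩ : EdgeT n)) ?_ ?_ ?_).symm
  · -- not diag
    rw [Sym2.isDiag_map f.injective]
    exact SimpleGraph.not_isDiag_of_mem_edgeSet H₀ (SimpleGraph.mem_edgeFinset.mp he)
  · intro e he
    simp only [Finset.mem_filter, Finset.mem_univ, true_and]
    have hadj : e ∈ H₀.edgeSet := SimpleGraph.mem_edgeFinset.mp he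
    induction e using Sym2.ind with
    | _ a b =>
      rw [Sym2.map_pair_eq, SimpleGraph.mem_edgeSet, SimpleGraph.map_adj_apply]
      exact H₀.mem_edgeSet.mp hadj
  · intro e₁ h₁ e₂ h₂ h
    exact Sym2.map.injective f.injective (congrArg Subtype.val h)
  · intro e' he'
    obtain ⟨e, he, heq⟩ := key (e' : Sym2 (Fin n)) (Finset.mem_filter.mp he').2
    exact ⟨e, he, Subtype.ext heq⟩

end Helpers4

set_option maxHeartbeats 1000000 in
lemma main_bound {Ω₀ : Type*} [MeasurableSpace Ω₀] (μ₀ : Measure Ω₀)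
    [IsProbabilityMeasure μ₀] (ξ : Ω₀ → ℝ) (hξ : Measurable ξ)
    (hsym : SymmetricRV μ₀ ξ) (hfin : FiniteLmgfNearZero μ₀ ξ)
    (v ℓ : ℕ) (hv : 0 < v) (H₀ : SimpleGraph (Fin v)) [DecidableRel H₀.Adj]
    (hℓ : H₀.edgeFinset.card = ℓ)
    {Ωn : Type*} [MeasurableSpace Ωn] (μn : Measure Ωn) [IsProbabilityMeasure μn]
    {n : ℕ} (Xn : EdgeT n → Ωn → ℝ) (hmeas : ∀ e, Measurable (Xn e))
    (hind : iIndepFun Xn μn)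
    (hid : ∀ e, IdentDistrib (Xn e) ξ μn μ₀)
    (hn : 2 ≤ n) {δ : ℝ} (hδ : 0 < δ) :
    μn {ω | (1 + δ) * ℓ * rateFnInv μ₀ ξ (((ℓ : ℝ) / (v : ℝ))⁻¹ * Real.log n) <
        ⨆ f : Fin v ↪ Fin n, graphWeight (fun e => Xn e ω) (SimpleGraph.map f H₀)} ≤
      ENNReal.ofReal (Real.exp (-δ * v * Real.log n)) := by
  set L := Real.log n with hL_def
  have hL : 0 < L := Real.log_pos (by exact_mod_cast hn)
  set tn := ((ℓ : ℝ) / (v : ℝ))⁻¹ * L with htn_def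
  set θ := rateFnInv μ₀ ξ tn with hθ_def
  set a := (1 + δ) * ℓ * θ with ha_def
  have hθ0 : 0 ≤ θ := Real.sInf_nonneg fun x hx => hx.1
  have ha0 : 0 ≤ a := by
    have h1 : (0:ℝ) ≤ 1 + δ := by linarith
    exact mul_nonneg (mul_nonneg h1 (Nat.cast_nonneg ℓ)) hθ0
  set F : (Fin v ↪ Fin n) → Finset (EdgeT n) := fun f =>
    Finset.univ.filter (fun e : EdgeT n =>
      (e : Sym2 (Fin n)) ∈ (SimpleGraph.map f H₀).edgeSet) with hF_def
  have hFcard : ∀ f : Fin v ↪ Fin n, (F f).card = ℓ := fun f =>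
    (card_filter_map H₀ f).trans hℓ
  have hgw : ∀ (f : Fin v ↪ Fin n) (ω : Ωn),
      graphWeight (fun e => Xn e ω) (SimpleGraph.map f H₀) = ∑ e ∈ F f, Xn e ω :=
    fun f ω => by simp only [hF_def]; exact graphWeight_eq_sum _ _
  have hsub : {ω | a < ⨆ f : Fin v ↪ Fin n,
        graphWeight (fun e => Xn e ω) (SimpleGraph.map f H₀)}
      ⊆ ⋃ f : Fin v ↪ Fin n, {ω | a < ∑ e ∈ F f, Xn e ω} := by
    intro ω hω
    simp only [Set.mem_setOf_eq] at hω
    by_cases hne : Nonempty (Fin v ↪ Fin n)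
    · have hbdd : BddAbove (Set.range fun f : Fin v ↪ Fin n =>
        graphWeight (fun e => Xn e ω) (SimpleGraph.map f H₀)) := (Set.finite_range _).bddAbove
      obtain ⟨f, hf⟩ := (lt_ciSup_iff hbdd).mp hω
      exact Set.mem_iUnion.mpr ⟨f, by rw [Set.mem_setOf_eq, ← hgw f ω]; exact hf⟩
    · rw [not_nonempty_iff] at hne
      rw [Real.iSup_of_isEmpty] at hω
      exact absurd hω (not_lt.mpr ha0)
  refine le_trans (measure_mono hsub) (le_trans (measure_iUnion_le _) ?_)
  rcases Nat.eq_zero_or_pos ℓ with hℓ0 | hℓpos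
  · -- no edges: every event is empty
    have hempty : ∀ f : Fin v ↪ Fin n, {ω | a < ∑ e ∈ F f, Xn e ω} = (∅ : Set Ωn) := by
      intro f
      have hF0 : F f = ∅ := Finset.card_eq_zero.mp (by rw [hFcard f, hℓ0])
      ext ω
      simp only [Set.mem_setOf_eq, hF0, Finset.sum_empty, Set.mem_empty_iff_false,
        iff_false, not_lt]
      exact ha0
    simp only [hempty, measure_empty, tsum_zero]
    exact zero_le
  have hℓR : (0:ℝ) < ℓ := by exact_mod_cast hℓpos
  have hvR : (0:ℝ) < v := by exact_mod_cast hv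
  have htn : 0 < tn := by
    rw [htn_def]
    positivity
  have hℓtn : (ℓ:ℝ) * tn = v * L := by
    rw [htn_def, inv_div]
    field_simp
  rcases eq_or_lt_of_le hθ0 with hθzero | hθpos
  · -- degenerate: ξ = 0 a.s.
    have h0 : μ₀ {x | ξ x ≠ 0} = 0 :=
      meas_ne_zero_eq_zero μ₀ ξ hsym hξ
        (meas_pos_eq_zero_of_rateFnInv_zero μ₀ ξ hsym hξ hfin htn hθzero.symm)
    have hnull : ∀ e : EdgeT n, μn {ω | Xn e ω ≠ 0} = 0 := by
      intro e
      have hmap := (hid e).map_eq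
      have heq : μn {ω | Xn e ω ≠ 0} = μ₀ {x | ξ x ≠ 0} := by
        have h1 : {ω | Xn e ω ≠ 0} = Xn e ⁻¹' ({(0:ℝ)}ᶜ) := rfl
        have h2 : {x | ξ x ≠ 0} = ξ ⁻¹' ({(0:ℝ)}ᶜ) := rfl
        rw [h1, h2, ← Measure.map_apply (hmeas e) (measurableSet_singleton (0:ℝ)).compl,
          ← Measure.map_apply hξ (measurableSet_singleton (0:ℝ)).compl, hmap]
      rw [heq, h0]
    have hallzero : ∀ f : Fin v ↪ Fin n, μn {ω | a < ∑ e ∈ F f, Xn e ω} = 0 := by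
      intro f
      have hsub2 : {ω | a < ∑ e ∈ F f, Xn e ω} ⊆ ⋃ e : EdgeT n, {ω | Xn e ω ≠ 0} := by
        intro ω hω
        by_contra hc
        simp only [Set.mem_iUnion, Set.mem_setOf_eq, not_exists, not_not] at hc
        have hzero : ∑ e ∈ F f, Xn e ω = 0 := Finset.sum_eq_zero fun e _ => hc e
        rw [Set.mem_setOf_eq, hzero] at hω
        exact absurd hω (not_lt.mpr ha0)
      exact measure_mono_null hsub2 (measure_iUnion_null hnull)
    simp only [hallzero, tsum_zero]
    exact zero_le
  · -- main Chernoff branch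
    have key : ∀ ε : ℝ, 0 < ε → ε < tn →
        (∑' f : Fin v ↪ Fin n, μn {ω | a < ∑ e ∈ F f, Xn e ω})
          ≤ ENNReal.ofReal (Real.exp (-δ * v * L + ℓ * ε)) := by
      intro ε hε hεtn
      set ε₂ := ε / (2 * (1 + δ)) with hε₂_def
      have h1δ : (0:ℝ) < 1 + δ := by linarith
      have hε₂ : 0 < ε₂ := by positivity
      have hε₂ε : 2 * ε₂ * (1 + δ) = ε := by
        rw [hε₂_def]; field_simp
      have hε₂lt : ε₂ < tn := by nlinarith
      set η := min δ (ε₂ / tn) with hη_def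
      have hη : 0 < η := lt_min hδ (by positivity)
      have hηδ : η ≤ δ := min_le_left _ _
      have hηtn : η * tn ≤ ε₂ := by
        have h := min_le_right δ (ε₂ / tn)
        calc η * tn ≤ ε₂ / tn * tn := mul_le_mul_of_nonneg_right h htn.le
          _ = ε₂ := div_mul_cancel₀ _ htn.ne'
      -- pick θ'' in the defining set, close to θ
      have hT := rate_set_nonempty μ₀ ξ hfin tn
      have hinf_lt : rateFnInv μ₀ ξ tn < θ + θ * η := by
        rw [← hθ_def]; nlinarith
      obtain ⟨θ'', hθ''T, hθ''lt⟩ := exists_lt_of_csInf_lt hT hinf_lt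
      obtain ⟨hθ''0, hθ''rate⟩ := hθ''T
      have hθ''ge : θ ≤ θ'' := csInf_le ⟨0, fun x hx => hx.1⟩ ⟨hθ''0, hθ''rate⟩
      have hθ''pos : 0 < θ'' := lt_of_lt_of_le hθpos hθ''ge
      have hθ''ub : θ'' ≤ (1 + η) * θ := by nlinarith
      -- pick s₀
      have hrlt : ((tn - ε₂ : ℝ) : EReal) < rateFn μ₀ ξ θ'' :=
        lt_of_lt_of_le (by exact_mod_cast (by linarith : tn - ε₂ < tn)) hθ''rate
      obtain ⟨s₀, hs₀0, hs₀int, hs₀⟩ :=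
        exists_good_s μ₀ ξ hsym hξ hθ''0 (by linarith : (0:ℝ) < tn - ε₂) hrlt
      set M := ∫ ω, Real.exp (s₀ * ξ ω) ∂μ₀ with hM_def
      set Λ := Real.log M with hΛ_def
      have hM1 : 1 ≤ M := one_le_integral_exp μ₀ ξ hsym hξ hs₀int
      have hMpos : 0 < M := lt_of_lt_of_le one_pos hM1
      have hΛ0 : 0 ≤ Λ := Real.log_nonneg hM1
      -- hs₀ : tn - ε₂ < s₀ * θ'' - Λ
      have hlamkey : (1 + δ) * (s₀ * θ) - Λ ≥ (1 + δ) * tn - ε := by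
        set lam := (1 + δ) * θ / θ'' with hlam_def
        have hlampos : 0 < lam := by positivity
        have hlam1 : 1 ≤ lam := by
          rw [hlam_def, le_div_iff₀ hθ''pos]
          nlinarith
        have heq : (1 + δ) * (s₀ * θ) = lam * (s₀ * θ'') := by
          rw [hlam_def]; field_simp
        have h1 : lam * (tn - ε₂) ≤ lam * (s₀ * θ'' - Λ) :=
          mul_le_mul_of_nonneg_left (by linarith) hlampos.le
        have h2 : lam * (s₀ * θ'' - Λ) ≤ (1 + δ) * (s₀ * θ) - Λ := by
          rw [heq]; nlinarith
        have h3 : (1 + δ) / (1 + η) ≤ lam := by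
          rw [div_le_iff₀ (by linarith : (0:ℝ) < 1 + η), hlam_def, div_mul_eq_mul_div,
            le_div_iff₀ hθ''pos]
          nlinarith
        have h4 : (1 + δ) / (1 + η) * (tn - ε₂) ≤ lam * (tn - ε₂) :=
          mul_le_mul_of_nonneg_right h3 (by linarith)
        have h5 : (1 + δ) * tn - ε ≤ (1 + δ) / (1 + η) * (tn - ε₂) := by
          rw [div_mul_eq_mul_div, le_div_iff₀ (by linarith : (0:ℝ) < 1 + η)]
          have h6 : (1 + δ) * (η * tn) ≤ (1 + δ) * ε₂ :=
            mul_le_mul_of_nonneg_left hηtn h1δ.le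
          nlinarith
        linarith
      -- Chernoff bound for each copy
      have hcopy : ∀ f : Fin v ↪ Fin n,
          μn {ω | a < ∑ e ∈ F f, Xn e ω}
            ≤ ENNReal.ofReal (Real.exp (-s₀ * a + ℓ * Λ)) := by
        intro f
        have hu : Measurable fun x : ℝ => Real.exp (s₀ * x) :=
          measurable_exp.comp (measurable_id.const_mul s₀)
        have hint_e : ∀ e : EdgeT n, Integrable (fun ω => Real.exp (s₀ * Xn e ω)) μn :=
          fun e => ((hid e).comp hu).integrable_iff.mpr hs₀int
        have hint_sum := hind.integrable_exp_mul_sum hmeas (s := F f) fun e _ => hint_e e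
        have hcher := measure_ge_le_exp_mul_mgf (μ := μn) a hs₀0 hint_sum
        have hmgf : mgf (∑ e ∈ F f, Xn e) μn s₀ = M ^ ℓ := by
          rw [hind.mgf_sum hmeas (F f)]
          have hme : ∀ e ∈ F f, mgf (Xn e) μn s₀ = M := by
            intro e _
            have hident := ((hid e).comp hu).integral_eq
            simpa [mgf, hM_def] using hident
          rw [Finset.prod_congr rfl hme, Finset.prod_const, hFcard f]
        have hMpow : M ^ ℓ = Real.exp (ℓ * Λ) := by
          calc M ^ ℓ = Real.exp (Real.log M) ^ ℓ := by rw [Real.exp_log hMpos]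
            _ = Real.exp (ℓ * Real.log M) := (Real.exp_nat_mul _ ℓ).symm
        rw [hmgf, hMpow, ← Real.exp_add] at hcher
        have hss : {ω | a < ∑ e ∈ F f, Xn e ω} ⊆ {ω | a ≤ (∑ e ∈ F f, Xn e) ω} := by
          intro ω hω
          simp only [Set.mem_setOf_eq, Finset.sum_apply]
          exact le_of_lt hω
        calc μn {ω | a < ∑ e ∈ F f, Xn e ω}
            ≤ μn {ω | a ≤ (∑ e ∈ F f, Xn e) ω} := measure_mono hss
          _ = ENNReal.ofReal ((μn {ω | a ≤ (∑ e ∈ F f, Xn e) ω}).toReal) :=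
              (ENNReal.ofReal_toReal (measure_ne_top _ _)).symm
          _ ≤ ENNReal.ofReal (Real.exp (-s₀ * a + ℓ * Λ)) :=
              ENNReal.ofReal_le_ofReal hcher
      -- sum up
      have hcard : (Fintype.card (Fin v ↪ Fin n) : ENNReal) ≤ ((n ^ v : ℕ) : ENNReal) := by
        have h := Fintype.card_embedding_eq (α := Fin v) (β := Fin n)
        rw [h, Fintype.card_fin, Fintype.card_fin]
        exact_mod_cast Nat.descFactorial_le_pow n v
      have hreal : ((n ^ v : ℕ) : ℝ) * Real.exp (-s₀ * a + ℓ * Λ)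
          ≤ Real.exp (-δ * v * L + ℓ * ε) := by
        have hnpow : ((n ^ v : ℕ) : ℝ) = Real.exp ((v : ℝ) * L) := by
          rw [hL_def, Real.exp_nat_mul, Real.exp_log (by positivity : (0:ℝ) < (n:ℝ))]
          push_cast
          ring
        rw [hnpow, ← Real.exp_add, Real.exp_le_exp]
        have hsa : s₀ * a = (ℓ : ℝ) * ((1 + δ) * (s₀ * θ)) := by
          rw [ha_def]; ring
        have hmul : (ℓ:ℝ) * ((1 + δ) * (s₀ * θ) - Λ) ≥ (ℓ:ℝ) * ((1 + δ) * tn - ε) :=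
          mul_le_mul_of_nonneg_left hlamkey (Nat.cast_nonneg ℓ)
        have hltn : (ℓ:ℝ) * ((1 + δ) * tn) = (1 + δ) * (v * L) := by
          rw [← hℓtn]; ring
        nlinarith
      calc (∑' f : Fin v ↪ Fin n, μn {ω | a < ∑ e ∈ F f, Xn e ω})
          ≤ ∑' _f : Fin v ↪ Fin n, ENNReal.ofReal (Real.exp (-s₀ * a + ℓ * Λ)) :=
            ENNReal.tsum_le_tsum hcopy
        _ = (Fintype.card (Fin v ↪ Fin n) : ENNReal)
              * ENNReal.ofReal (Real.exp (-s₀ * a + ℓ * Λ)) := by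
            rw [tsum_fintype, Finset.sum_const, nsmul_eq_mul, Finset.card_univ]
        _ ≤ ((n ^ v : ℕ) : ENNReal) * ENNReal.ofReal (Real.exp (-s₀ * a + ℓ * Λ)) :=
            mul_le_mul_left hcard _
        _ = ENNReal.ofReal (((n ^ v : ℕ) : ℝ) * Real.exp (-s₀ * a + ℓ * Λ)) := by
            rw [ENNReal.ofReal_mul (Nat.cast_nonneg _), ENNReal.ofReal_natCast]
        _ ≤ ENNReal.ofReal (Real.exp (-δ * v * L + ℓ * ε)) :=
            ENNReal.ofReal_le_ofReal hreal
    -- let ε → 0⁺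
    have hlim : Tendsto (fun ε : ℝ => ENNReal.ofReal (Real.exp (-δ * v * L + ℓ * ε)))
        (nhdsWithin 0 (Set.Ioi 0)) (nhds (ENNReal.ofReal (Real.exp (-δ * v * L + ℓ * 0)))) := by
      refine Tendsto.mono_left ?_ nhdsWithin_le_nhds
      exact (ENNReal.continuous_ofReal.comp (Real.continuous_exp.comp
        (continuous_const.add (continuous_const.mul continuous_id)))).tendsto 0
    have hev : ∀ᶠ ε in nhdsWithin (0:ℝ) (Set.Ioi 0),
        (∑' f : Fin v ↪ Fin n, μn {ω | a < ∑ e ∈ F f, Xn e ω})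
          ≤ ENNReal.ofReal (Real.exp (-δ * v * L + ℓ * ε)) := by
      filter_upwards [Ioo_mem_nhdsGT_of_mem (Set.left_mem_Ico.mpr htn)] with ε hε
      exact key ε hε.1 hε.2
    have := ge_of_tendsto hlim hev
    simpa using this


/-- for a fixed balanced graph `H₀` with `v` vertices, `ℓ` edges and density
`d = ℓ/v`, with i.i.d. good edge weights on `K_n`, the maximal weight `W_n` of a copy of
`H₀` satisfies, with `δ_n = (log n)^{-1/2}`,
`P(W_n > (1+δ_n) ℓ Λ*⁻¹(d⁻¹ log n)) ≤ exp(-δ_n v log n)` for each `n ≥ 2`; in particular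
`W_n ≤ (1 + o(1)) ℓ Λ*⁻¹(d⁻¹ log n)` with high probability. -/
theorem balanced_copy_upper {Ω₀ : Type*} [MeasurableSpace Ω₀] (μ₀ : Measure Ω₀)
    [IsProbabilityMeasure μ₀] (ξ : Ω₀ → ℝ) (hξ : Measurable ξ) (hgood : Good μ₀ ξ)
    (v ℓ : ℕ) (hv : 0 < v) (H₀ : SimpleGraph (Fin v)) [DecidableRel H₀.Adj]
    (hℓ : H₀.edgeFinset.card = ℓ)
    (hbal : ∀ H' : H₀.Subgraph, H'.verts.Nonempty →
      (H'.edgeSet.ncard : ℝ) / (H'.verts.ncard : ℝ) ≤ (ℓ : ℝ) / (v : ℝ))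
    {Ω : ℕ → Type*} [∀ n, MeasurableSpace (Ω n)] (μ : ∀ n, Measure (Ω n))
    [∀ n, IsProbabilityMeasure (μ n)]
    (X : ∀ n, EdgeT n → Ω n → ℝ) (hmeas : ∀ n e, Measurable (X n e))
    (hind : ∀ n, iIndepFun (X n) (μ n))
    (hid : ∀ n e, IdentDistrib (X n e) ξ (μ n) μ₀) :
    (∀ n : ℕ, 2 ≤ n →
      μ n {ω | (1 + Real.log n ^ (-(1/2 : ℝ))) * ℓ *
            rateFnInv μ₀ ξ (((ℓ : ℝ) / (v : ℝ))⁻¹ * Real.log n) <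
          ⨆ f : Fin v ↪ Fin n,
            graphWeight (fun e => X n e ω) (SimpleGraph.map f H₀)} ≤
        ENNReal.ofReal (Real.exp (-(Real.log n ^ (-(1/2 : ℝ))) * v * Real.log n))) ∧
    (∀ ε : ℝ, 0 < ε →
      Tendsto (fun n : ℕ => μ n {ω | (1 + ε) * ℓ *
            rateFnInv μ₀ ξ (((ℓ : ℝ) / (v : ℝ))⁻¹ * Real.log n) <
          ⨆ f : Fin v ↪ Fin n,
            graphWeight (fun e => X n e ω) (SimpleGraph.map f H₀)}) atTop (nhds 0)) := by

  obtain ⟨hsym, hfin, -⟩ := hgood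
  constructor
  · intro n hn
    have hL : 0 < Real.log n := Real.log_pos (by exact_mod_cast hn)
    exact main_bound μ₀ ξ hξ hsym hfin v ℓ hv H₀ hℓ (μ n) (X n) (hmeas n) (hind n)
      (hid n) hn (Real.rpow_pos_of_pos hL _)
  · intro ε hε
    have hub : ∀ᶠ n : ℕ in atTop,
        μ n {ω | (1 + ε) * ℓ * rateFnInv μ₀ ξ (((ℓ : ℝ) / (v : ℝ))⁻¹ * Real.log n) <
            ⨆ f : Fin v ↪ Fin n, graphWeight (fun e => X n e ω) (SimpleGraph.map f H₀)}
          ≤ ENNReal.ofReal (Real.exp (-ε * v * Real.log n)) := by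
      filter_upwards [eventually_ge_atTop 2] with n hn
      exact main_bound μ₀ ξ hξ hsym hfin v ℓ hv H₀ hℓ (μ n) (X n) (hmeas n) (hind n)
        (hid n) hn hε
    have h1 : Tendsto (fun n : ℕ => Real.log n) atTop atTop :=
      Real.tendsto_log_atTop.comp tendsto_natCast_atTop_atTop
    have h2 : Tendsto (fun n : ℕ => -ε * v * Real.log n) atTop atBot :=
      Tendsto.const_mul_atTop_of_neg (by
        have hv1 : (1:ℝ) ≤ v := by exact_mod_cast hv
        nlinarith) h1
    have h3 : Tendsto (fun n : ℕ => Real.exp (-ε * v * Real.log n)) atTop (nhds 0) :=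
      Real.tendsto_exp_atBot.comp h2
    have h4 : Tendsto (fun n : ℕ => ENNReal.ofReal (Real.exp (-ε * v * Real.log n)))
        atTop (nhds 0) := by
      have := ENNReal.tendsto_ofReal h3
      simpa using this
    refine tendsto_of_tendsto_of_tendsto_of_le_of_le' tendsto_const_nhds h4 ?_ hub
    exact Filter.Eventually.of_forall fun n => zero_le
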